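/- Let V be a finite vertex set and E ⊆ V × V a finite arc set such that the directed graph (V,E) is strongly connected. Then there exists a potential function y : V → ℝ such that, defining the weight of each arc (u,v) ∈ E as w(u,v) = 1/(max{y(v) − y(u), 0} + 1), every subset S ⊆ V satisfies (1/2)·w(∂⁻S) ≤ w(∂⁺S) ≤ 2·w(∂⁻S). -/

import Mathlib

open Finset

variable {V : Type*}

/-- The out-boundary `∂⁺S`: arcs `(u,v) ∈ E` with `u ∈ S` and `v ∉ S`. -/
def outBoundary [DecidableEq V] (E : Finset (V × V)) (S : Finset V) : Finset (V × V) :=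
  E.filter fun e => e.1 ∈ S ∧ e.2 ∉ S

/-- The in-boundary `∂⁻S`: arcs `(u,v) ∈ E` with `v ∈ S` and `u ∉ S`. -/
def inBoundary [DecidableEq V] (E : Finset (V × V)) (S : Finset V) : Finset (V × V) :=
  E.filter fun e => e.2 ∈ S ∧ e.1 ∉ S

/-- A directed graph (given by its arc set) is strongly connected if every ordered
pair of vertices is joined by a directed path. -/
def StronglyConnected (E : Finset (V × V)) : Prop :=
  ∀ u v : V, Relation.ReflTransGen (fun a b : V => (a, b) ∈ E) u v


open Filter Asymptotics Real intervalIntegral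

noncomputable section BalancingAux


noncomputable def bw (s : ℝ) : ℝ := 1 / (max s 0 + 1)

lemma bw_pos (s : ℝ) : 0 < bw s := by
  unfold bw; positivity

lemma continuous_bw : Continuous bw := by
  unfold bw
  apply Continuous.div continuous_const
  · exact ((continuous_id.max continuous_const).add continuous_const)
  · intro s
    have : (0:ℝ) ≤ max s 0 := le_max_right _ _
    nlinarith

noncomputable def bf (t : ℝ) : ℝ := ∫ s in (0:ℝ)..t, bw s

lemma bw_intble (a b : ℝ) : IntervalIntegrable bw MeasureTheory.volume a b :=
  continuous_bw.intervalIntegrable a b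

lemma hasDerivAt_bf (t : ℝ) : HasDerivAt bf (bw t) t := by
  exact intervalIntegral.integral_hasDerivAt_right (bw_intble 0 t)
    (continuous_bw.stronglyMeasurableAtFilter _ _) continuous_bw.continuousAt

lemma continuous_bf : Continuous bf := by
  have : Differentiable ℝ bf := fun t => (hasDerivAt_bf t).differentiableAt
  exact this.continuous

lemma bf_zero : bf 0 = 0 := intervalIntegral.integral_same

lemma strictMono_bf : StrictMono bf := by
  apply strictMono_of_deriv_pos
  intro t
  rw [(hasDerivAt_bf t).deriv]
  exact bw_pos t

lemma bf_of_nonpos {t : ℝ} (ht : t ≤ 0) : bf t = t := by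
  unfold bf
  rw [intervalIntegral.integral_symm]
  have : ∀ s ∈ Set.uIcc t 0, bw s = 1 := by
    intro s hs
    rw [Set.uIcc_of_le ht] at hs
    unfold bw
    rw [max_eq_right hs.2]
    norm_num
  rw [intervalIntegral.integral_congr this]
  simp

lemma bf_of_nonneg {t : ℝ} (ht : 0 ≤ t) : bf t = Real.log (t + 1) := by
  unfold bf
  have h1 : ∀ s ∈ Set.uIcc (0:ℝ) t, bw s = (s + 1)⁻¹ := by
    intro s hs
    rw [Set.uIcc_of_le ht] at hs
    unfold bw
    rw [max_eq_left hs.1, one_div]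
  rw [intervalIntegral.integral_congr h1]
  have h2 : (∫ s in (0:ℝ)..t, (s + 1)⁻¹) = ∫ s in (0+1:ℝ)..(t+1), s⁻¹ := by
    rw [← intervalIntegral.integral_comp_add_right (fun s => s⁻¹) 1]
  rw [h2, integral_inv_of_pos (by norm_num) (by linarith)]
  norm_num





lemma exists_cross {r : V → V → Prop} {P : V → Prop} {u v : V}
    (h : Relation.ReflTransGen r u v) (hu : P u) (hv : ¬ P v) :
    ∃ a b, r a b ∧ P a ∧ ¬ P b := by
  induction h with
  | refl => exact absurd hu hv
  | @tail b c hub hbc ih =>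
    by_cases hb : P b
    · exact ⟨b, c, hbc, hb, hv⟩
    · exact ih hb

/-- If `y q - y p = m > 0` then strongly connected graph has an arc dropping by `m/n`. -/
lemma exists_down_arc [Fintype V] [DecidableEq V] (E : Finset (V × V))
    (hsc : StronglyConnected E) (y : V → ℝ) (p q : V) {m : ℝ}
    (hm : 0 < m) (hpq : y q - y p = m) :
    ∃ a b : V, (a, b) ∈ E ∧ y b - y a ≤ -(m / Fintype.card V) := by
  set n := Fintype.card V with hn
  have hn0 : 0 < (n:ℝ) := by
    have : 0 < n := Fintype.card_pos_iff.mpr ⟨p⟩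
    exact_mod_cast this
  have hmn : 0 < m / n := div_pos hm hn0
  -- find an empty interval
  have hk : ∃ k : Fin n, ∀ v : V, y v ∉ Set.Ioc (y p + k * (m/n)) (y p + (k+1) * (m/n)) := by
    by_contra hcon
    push_neg at hcon
    choose g hg using hcon
    -- g : Fin n → V, y (g k) ∈ Ioc ...
    have hginj : Function.Injective g := by
      intro k l hkl
      have hk1 := hg k
      have hl1 := hg l
      rw [hkl] at hk1
      obtain ⟨hk1a, hk1b⟩ := hk1
      obtain ⟨hl1a, hl1b⟩ := hl1
      -- k*(m/n) < y (g l) - y p ≤ (k+1)*(m/n), same for l ⇒ k = l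
      have h1 : (k:ℝ) < (l:ℝ) + 1 := by
        have hx : (k:ℝ) * (m/n) < ((l:ℝ)+1) * (m/n) := by linarith
        exact lt_of_mul_lt_mul_right hx hmn.le
      have h2 : (l:ℝ) < (k:ℝ) + 1 := by
        have hx : (l:ℝ) * (m/n) < ((k:ℝ)+1) * (m/n) := by linarith
        exact lt_of_mul_lt_mul_right hx hmn.le
      have : (k:ℕ) = (l:ℕ) := by
        have hk' : (k:ℕ) < (l:ℕ) + 1 := by exact_mod_cast h1
        have hl' : (l:ℕ) < (k:ℕ) + 1 := by exact_mod_cast h2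
        omega
      exact Fin.ext this
    -- p is not any g k
    have hpg : ∀ k, g k ≠ p := by
      intro k hkp
      have := (hg k).1
      rw [hkp] at this
      have hk0 : (0:ℝ) ≤ (k:ℝ) * (m/n) := by positivity
      linarith
    -- injective map Option (Fin n) → V
    let G : Option (Fin n) → V := fun o => o.elim p g
    have hGinj : Function.Injective G := by
      intro o1 o2 h12
      match o1, o2 with
      | none, none => rfl
      | none, some k => exact absurd h12.symm (hpg k)
      | some k, none => exact absurd h12 (hpg k)
      | some k, some l => exact congrArg some (hginj h12)
    have := Fintype.card_le_of_injective G hGinj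
    simp [hn] at this
  obtain ⟨k, hk⟩ := hk
  -- S = vertices below the gap
  classical
  set P : V → Prop := fun v => y v ≤ y p + k * (m/n) with hP
  have hpP : P p := by
    simp only [P]
    have : (0:ℝ) ≤ (k:ℝ) * (m/n) := by positivity
    linarith
  have hqP : ¬ P q := by
    simp only [P]
    push_neg
    have hkn : (k:ℝ) ≤ (n:ℝ) - 1 := by
      have : (k:ℕ) ≤ n - 1 := Nat.le_pred_of_lt k.isLt
      have hn1 : 1 ≤ n := Fintype.card_pos_iff.mpr ⟨p⟩
      have : ((k:ℕ):ℝ) ≤ ((n-1 : ℕ):ℝ) := by exact_mod_cast this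
      rwa [Nat.cast_sub hn1, Nat.cast_one] at this
    have : (k:ℝ) * (m/n) < m := by
      calc (k:ℝ) * (m/n) ≤ ((n:ℝ)-1) * (m/n) := by
            apply mul_le_mul_of_nonneg_right hkn (le_of_lt hmn)
        _ < (n:ℝ) * (m/n) := by nlinarith
        _ = m := by field_simp
    linarith
  obtain ⟨a, b, hab, haP, hbP⟩ := exists_cross (P := fun v => ¬ P v) (hsc q p) hqP (not_not.mpr hpP)
  rw [not_not] at hbP
  refine ⟨a, b, hab, ?_⟩
  -- y a > y p + (k+1)*(m/n) since y a > y p + k*(m/n) and not in the gap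
  have ha1 : y p + k * (m/n) < y a := by
    simp only [P] at haP
    linarith [not_le.mp haP]
  have ha2 : ¬ (y a ∈ Set.Ioc (y p + k * (m/n)) (y p + (k+1) * (m/n))) := hk a
  simp only [Set.mem_Ioc, not_and, not_le] at ha2
  have ha3 : y p + (k+1) * (m/n) < y a := ha2 ha1
  have hb1 : y b ≤ y p + k * (m/n) := hbP
  have : ((k:ℝ)+1) * (m/n) - (k:ℝ) * (m/n) = m/n := by ring
  linarith

noncomputable def bF (E : Finset (V × V)) (y : V → ℝ) : ℝ := ∑ e ∈ E, bf (y e.2 - y e.1)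

lemma bF_bound [Fintype V] [DecidableEq V] (E : Finset (V × V))
    (hsc : StronglyConnected E) (y : V → ℝ) (v0 : V) (hy0 : y v0 = 0)
    {m : ℝ} (hm : 0 < m) (hub : ∀ v, |y v| ≤ m) {c : V} (hc : |y c| = m) :
    bF E y ≤ E.card * Real.log (2*m+1) - m / Fintype.card V := by
  have harc : ∃ a b : V, (a, b) ∈ E ∧ y b - y a ≤ -(m / Fintype.card V) := by
    rcases abs_cases (y c) with ⟨h1, _⟩ | ⟨h1, _⟩
    · exact exists_down_arc E hsc y v0 c hm (by rw [hy0]; rw [hc] at h1; linarith)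
    · exact exists_down_arc E hsc y c v0 hm (by rw [hy0]; rw [hc] at h1; linarith)
  obtain ⟨a, b, hab, hdrop⟩ := harc
  have hsplit : bF E y = bf (y (a,b).2 - y (a,b).1) + ∑ e ∈ E.erase (a,b), bf (y e.2 - y e.1) :=
    (Finset.add_sum_erase E _ hab).symm
  have hlog0 : 0 ≤ Real.log (2*m+1) := Real.log_nonneg (by linarith)
  have hterm : bf (y (a,b).2 - y (a,b).1) ≤ -(m / Fintype.card V) := by
    have h2 : bf (y b - y a) ≤ bf (-(m / Fintype.card V)) := strictMono_bf.monotone hdrop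
    have e1 : bf (-(m / Fintype.card V)) = -(m / Fintype.card V) :=
      bf_of_nonpos (neg_nonpos.mpr (by positivity))
    rw [e1] at h2
    exact h2
  have hrest : ∑ e ∈ E.erase (a,b), bf (y e.2 - y e.1) ≤ E.card * Real.log (2*m+1) := by
    calc ∑ e ∈ E.erase (a,b), bf (y e.2 - y e.1)
        ≤ (E.erase (a,b)).card • Real.log (2*m+1) := by
          apply Finset.sum_le_card_nsmul
          intro e _
          have h1 : y e.2 - y e.1 ≤ 2*m := by
            have := hub e.1; have := hub e.2
            have := abs_le.mp (hub e.1); have := abs_le.mp (hub e.2)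
            linarith
          have h2 : bf (y e.2 - y e.1) ≤ bf (2*m) := strictMono_bf.monotone h1
          have e2 : bf (2*m) = Real.log (2*m+1) := bf_of_nonneg (by linarith)
          rw [e2] at h2
          exact h2
      _ ≤ E.card • Real.log (2*m+1) := by
          apply nsmul_le_nsmul_left hlog0
          exact Finset.card_le_card (Finset.erase_subset _ _)
      _ = E.card * Real.log (2*m+1) := by rw [nsmul_eq_mul]
  rw [hsplit]
  linarith

lemma exists_bound (c n : ℕ) (hn : 0 < n) :
    ∃ B : ℝ, 1 ≤ B ∧ ∀ m : ℝ, B ≤ m → (c:ℝ) * Real.log (2*m+1) - m / n < 0 := by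
  have h2 : Tendsto (fun m:ℝ => 2*m+1) atTop atTop := by
    apply tendsto_atTop_add_const_right
    exact (tendsto_id (α := ℝ)).const_mul_atTop two_pos
  have h3 : (fun m:ℝ => Real.log (2*m+1)) =o[atTop] (fun m:ℝ => 2*m+1) :=
    Real.isLittleO_log_id_atTop.comp_tendsto h2
  have h4 : (fun m:ℝ => 2*m+1) =O[atTop] (fun m:ℝ => m) := by
    apply Asymptotics.IsBigO.of_bound 3
    filter_upwards [eventually_ge_atTop (1:ℝ)] with m hm
    rw [Real.norm_eq_abs, Real.norm_eq_abs, abs_of_nonneg (by linarith), abs_of_nonneg (by linarith)]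
    linarith
  have h5 : (fun m:ℝ => Real.log (2*m+1)) =o[atTop] (fun m:ℝ => m) := h3.trans_isBigO h4
  have hε : (0:ℝ) < 1 / (2 * n * (c+1)) := by positivity
  have h6 := h5.bound hε
  have h7 : ∀ᶠ m : ℝ in atTop, (c:ℝ) * Real.log (2*m+1) - m / n < 0 := by
    filter_upwards [h6, eventually_ge_atTop (1:ℝ)] with m hbd hm1
    rw [Real.norm_eq_abs, Real.norm_eq_abs] at hbd
    have hlog0 : 0 ≤ Real.log (2*m+1) := Real.log_nonneg (by linarith)
    rw [abs_of_nonneg hlog0, abs_of_nonneg (show (0:ℝ) ≤ m by linarith)] at hbd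
    have hcn : (c:ℝ) * Real.log (2*m+1) ≤ (c:ℝ) * (1 / (2 * n * (c+1)) * m) :=
      mul_le_mul_of_nonneg_left hbd (Nat.cast_nonneg c)
    have key : (c:ℝ) * (1 / (2 * ↑n * (↑c+1)) * m) ≤ m / (2*n) := by
      have hc1 : (c:ℝ) / (c+1) ≤ 1 := by
        rw [div_le_one (by positivity)]; linarith
      have hn0 : (0:ℝ) < n := by exact_mod_cast hn
      have heq : (c:ℝ) * (1 / (2 * ↑n * (↑c+1)) * m) = ((c:ℝ)/(↑c+1)) * (m/(2*↑n)) := by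
        field_simp
      rw [heq]
      have hq : (0:ℝ) ≤ m/(2*↑n) := by positivity
      nlinarith
    have hn0 : (0:ℝ) < n := by exact_mod_cast hn
    have : m / (2*↑n) < m / ↑n := by
      apply div_lt_div_of_pos_left (by linarith) hn0
      linarith
    linarith
  obtain ⟨B0, hB0⟩ := eventually_atTop.mp h7
  exact ⟨max B0 1, le_max_right _ _, fun m hm => hB0 m (le_trans (le_max_left _ _) hm)⟩

lemma balanced [DecidableEq V] (E : Finset (V × V)) (y : V → ℝ)
    (hmax : ∀ z, bF E z ≤ bF E y) (v : V) :
    ∑ e ∈ E, bw (y e.2 - y e.1) *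
      ((if e.2 = v then (1:ℝ) else 0) - (if e.1 = v then 1 else 0)) = 0 := by
  set κ : V × V → ℝ := fun e => (if e.2 = v then (1:ℝ) else 0) - (if e.1 = v then 1 else 0)
    with hκ
  set φ : ℝ → ℝ := fun t => ∑ e ∈ E, bf ((y e.2 - y e.1) + t * κ e) with hφ
  have hφd : HasDerivAt φ (∑ e ∈ E, bw (y e.2 - y e.1) * κ e) 0 := by
    apply HasDerivAt.fun_sum
    intro e _
    have hlin : HasDerivAt (fun t : ℝ => (y e.2 - y e.1) + t * κ e) (κ e) 0 := by
      simpa using ((hasDerivAt_id (0:ℝ)).mul_const (κ e)).const_add (y e.2 - y e.1)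
    have h2 := (hasDerivAt_bf ((y e.2 - y e.1) + 0 * κ e)).comp 0 hlin
    simpa [mul_comm, Function.comp_def] using h2
  have hφτ : ∀ t, φ t = bF E (fun u => y u + t * (if u = v then 1 else 0)) := by
    intro t
    apply Finset.sum_congr rfl
    intro e _
    congr 1
    simp only [hκ]
    ring
  have hloc : IsLocalMax φ 0 := by
    apply Filter.Eventually.of_forall
    intro t
    have h1 : φ 0 = bF E y := by
      apply Finset.sum_congr rfl
      intro e _
      norm_num
    rw [hφτ t, h1]
    exact hmax _
  have := hloc.hasDerivAt_eq_zero hφd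
  exact this

lemma cut_eq [Fintype V] [DecidableEq V] (E : Finset (V × V)) (y : V → ℝ)
    (hbal : ∀ v : V, ∑ e ∈ E, bw (y e.2 - y e.1) *
      ((if e.2 = v then (1:ℝ) else 0) - (if e.1 = v then 1 else 0)) = 0) (S : Finset V) :
    ∑ e ∈ inBoundary E S, bw (y e.2 - y e.1) = ∑ e ∈ outBoundary E S, bw (y e.2 - y e.1) := by
  have h0 : ∑ v ∈ S, ∑ e ∈ E, bw (y e.2 - y e.1) *
      ((if e.2 = v then (1:ℝ) else 0) - (if e.1 = v then 1 else 0)) = 0 :=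
    Finset.sum_eq_zero fun v _ => hbal v
  rw [Finset.sum_comm] at h0
  have h1 : ∀ e ∈ E, (∑ v ∈ S, bw (y e.2 - y e.1) *
      ((if e.2 = v then (1:ℝ) else 0) - (if e.1 = v then 1 else 0)))
      = (if e.2 ∈ S ∧ e.1 ∉ S then bw (y e.2 - y e.1) else 0)
        - (if e.1 ∈ S ∧ e.2 ∉ S then bw (y e.2 - y e.1) else 0) := by
    intro e _
    rw [← Finset.mul_sum]
    rw [Finset.sum_sub_distrib, Finset.sum_ite_eq, Finset.sum_ite_eq]
    by_cases h2 : e.2 ∈ S <;> by_cases h3 : e.1 ∈ S <;> simp [h2, h3]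
  rw [Finset.sum_congr rfl h1, Finset.sum_sub_distrib] at h0
  rw [← Finset.sum_filter, ← Finset.sum_filter] at h0
  unfold inBoundary outBoundary
  linarith


end BalancingAux

/-- **Existence of balancing weights.** For every strongly connected finite directed
graph there is a potential function `y : V → ℝ` such that, with arc weights
`w(u,v) = 1/(max{y(v) - y(u), 0} + 1)`, every cut satisfies
`(1/2)·w(∂⁻S) ≤ w(∂⁺S) ≤ 2·w(∂⁻S)`. -/
theorem exists_balancing_potential [Fintype V] [DecidableEq V]
    (E : Finset (V × V)) (hsc : StronglyConnected E) :
    ∃ y : V → ℝ, ∀ S : Finset V,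
      (1 / 2) * (∑ e ∈ inBoundary E S, 1 / (max (y e.2 - y e.1) 0 + 1))
          ≤ ∑ e ∈ outBoundary E S, 1 / (max (y e.2 - y e.1) 0 + 1) ∧
      ∑ e ∈ outBoundary E S, 1 / (max (y e.2 - y e.1) 0 + 1)
          ≤ 2 * ∑ e ∈ inBoundary E S, 1 / (max (y e.2 - y e.1) 0 + 1) := by
  by_cases hne : Nonempty V
  case neg =>
    refine ⟨0, fun S => ?_⟩
    have hE : E = ∅ := by
      rcases E.eq_empty_or_nonempty with h | ⟨e, _⟩
      · exact h
      · exact absurd ⟨e.1⟩ hne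
    subst hE
    simp [inBoundary, outBoundary]
  case pos =>
    have v0 : V := Classical.arbitrary V
    have hcard : 0 < Fintype.card V := Fintype.card_pos_iff.mpr hne
    obtain ⟨B, hB1, hB⟩ := exists_bound E.card (Fintype.card V) hcard
    set K : Set (V → ℝ) :=
      Set.Icc (fun _ => -B) (fun _ => B) ∩ {y | y v0 = 0} with hK
    have hKc : IsCompact K :=
      IsCompact.inter_right isCompact_Icc (isClosed_eq (continuous_apply v0) continuous_const)
    have h0K : (0 : V → ℝ) ∈ K := by
      constructor
      · exact Set.mem_Icc.mpr ⟨fun v => by simp; linarith, fun v => by simp; linarith⟩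
      · rfl
    have hFcont : Continuous (bF E) := by
      apply continuous_finset_sum
      intro e _
      exact continuous_bf.comp ((continuous_apply e.2).sub (continuous_apply e.1))
    obtain ⟨y, hyK, hymax⟩ := hKc.exists_isMaxOn ⟨0, h0K⟩ hFcont.continuousOn
    have hF0 : bF E (0 : V → ℝ) = 0 := by
      apply Finset.sum_eq_zero
      intro e _
      simpa using bf_zero
    have hglob : ∀ z, bF E z ≤ bF E y := by
      intro z
      set z' : V → ℝ := fun u => z u - z v0 with hz'
      have hz'0 : z' v0 = 0 := sub_self _
      have hzz : bF E z' = bF E z := by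
        apply Finset.sum_congr rfl
        intro e _
        congr 1
        simp only [hz']
        ring
      rw [← hzz]
      by_cases hzb : ∀ v, |z' v| ≤ B
      · refine hymax ⟨Set.mem_Icc.mpr ⟨fun v => ?_, fun v => ?_⟩, hz'0⟩
        · exact (abs_le.mp (hzb v)).1
        · exact (abs_le.mp (hzb v)).2
      · push_neg at hzb
        obtain ⟨v1, hv1⟩ := hzb
        obtain ⟨c, _, hc⟩ := Finset.exists_max_image univ (fun v => |z' v|) ⟨v0, mem_univ v0⟩
        have hm : B < |z' c| := lt_of_lt_of_le hv1 (hc v1 (mem_univ v1))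
        have hm0 : 0 < |z' c| := lt_of_lt_of_le (lt_of_lt_of_le one_pos hB1) hm.le
        have hb := bF_bound E hsc z' v0 hz'0 hm0 (fun v => hc v (mem_univ v)) rfl
        have hneg := hB _ hm.le
        refine le_of_lt ?_
        calc bF E z' ≤ _ := hb
          _ < 0 := hneg
          _ = bF E (0 : V → ℝ) := hF0.symm
          _ ≤ bF E y := hymax h0K
        
    have hbal := balanced E y hglob
    have hcut := cut_eq E y hbal
    refine ⟨y, fun S => ?_⟩
    have hrw : ∀ T : Finset (V × V),
        (∑ e ∈ T, 1 / (max (y e.2 - y e.1) 0 + 1)) = ∑ e ∈ T, bw (y e.2 - y e.1) := fun T => rfl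
    rw [hrw, hrw]
    have hnn : (0:ℝ) ≤ ∑ e ∈ outBoundary E S, bw (y e.2 - y e.1) :=
      Finset.sum_nonneg fun e _ => (bw_pos _).le
    constructor <;> [skip; skip] <;> have := hcut S <;> linarith
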